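/- arXiv:2008.06375 — 6 statements merged into one kernel-verified Lean document; each statement's English description precedes it below -/
import Mathlib

section
/- Let μ > 1, α ∈ [0,1], and set θ = 2α(μ-1)/(μ + α(μ-1)). Define f₀(x) = log(1-x) + x/(1-θx) for x ∈ [0,1). Then f₀'(0) = 0, and if θ ≤ 1/2 then f₀'(x) < 0 for all x ∈ (0,1), so that f₀ is strictly decreasing on [0,1) and x = 0 is the only root of f₀ in [0,1). -/
theorem stmt0 (μ α : ℝ) (hμ : 1 < μ) (hα : α ∈ Set.Icc (0:ℝ) 1)
    (θ : ℝ) (hθ : θ = 2*α*(μ-1)/(μ + α*(μ-1)))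
    (f₀ : ℝ → ℝ) (hf : ∀ x, f₀ x = Real.log (1-x) + x/(1-θ*x)) :
    deriv f₀ 0 = 0 ∧
    (θ ≤ 1/2 →
      (∀ x ∈ Set.Ioo (0:ℝ) 1, deriv f₀ x < 0) ∧
      StrictAntiOn f₀ (Set.Ico (0:ℝ) 1) ∧
      (∀ x ∈ Set.Ico (0:ℝ) 1, f₀ x = 0 → x = 0)) := by
  obtain ⟨hα0, hα1⟩ := hα
  have hθ0 : 0 ≤ θ := by
    rw [hθ]
    apply div_nonneg
    · nlinarith
    · nlinarith
  have key : ∀ x : ℝ, 1 - x ≠ 0 → 1 - θ*x ≠ 0 →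
      HasDerivAt f₀ (-(1-x)⁻¹ + 1/(1-θ*x)^2) x := by
    intro x hx hd
    have h1 : HasDerivAt (fun y : ℝ => 1 - y) (-1) x := by
      simpa using (hasDerivAt_id x).const_sub 1
    have hlog : HasDerivAt (fun y => Real.log (1-y)) (-1/(1-x)) x := h1.log hx
    have h2 : HasDerivAt (fun y : ℝ => 1 - θ*y) (-θ) x := by
      simpa using ((hasDerivAt_id x).const_mul θ).const_sub 1
    have hdiv : HasDerivAt (fun y : ℝ => y/(1-θ*y))
        ((1*(1-θ*x) - x*(-θ))/(1-θ*x)^2) x :=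
      (hasDerivAt_id x).div h2 hd
    have hsum : HasDerivAt (fun y => Real.log (1-y) + y/(1-θ*y))
        (-1/(1-x) + (1*(1-θ*x) - x*(-θ))/(1-θ*x)^2) x := hlog.add hdiv
    have heq : (fun y => Real.log (1-y) + y/(1-θ*y)) = f₀ := by
      funext y; rw [hf]
    rw [heq] at hsum
    convert hsum using 1
    field_simp
    ring
  constructor
  · have h := key 0 (by norm_num) (by norm_num)
    rw [h.deriv]; norm_num
  intro hθ2
  have hderivneg : ∀ x ∈ Set.Ioo (0:ℝ) 1, deriv f₀ x < 0 := by
    rintro x ⟨hx0, hx1⟩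
    have hθx : θ * x ≤ 1/2 := by nlinarith
    have hd : (0:ℝ) < 1 - θ*x := by linarith
    have h := key x (by intro h; linarith [sub_eq_zero.mp h]) (ne_of_gt hd)
    rw [h.deriv]
    have h1 : (0:ℝ) < 1 - x := by linarith
    have hlt : 1/(1-θ*x)^2 < (1-x)⁻¹ := by
      rw [inv_eq_one_div, div_lt_div_iff₀ (by positivity) h1]
      rcases eq_or_lt_of_le hθ0 with h0 | h0
      · rw [← h0]; nlinarith
      · nlinarith [mul_pos (mul_pos h0 h0) hx0]
    linarith
  have hcont : ContinuousOn f₀ (Set.Ico 0 1) := by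
    rintro x ⟨hx0, hx1⟩
    have hθx : θ * x ≤ 1/2 := by nlinarith
    have hd : (1:ℝ) - θ*x ≠ 0 := by intro h; linarith [sub_eq_zero.mp h]
    exact ((key x (by intro h; linarith [sub_eq_zero.mp h]) hd).continuousAt).continuousWithinAt
  have hanti : StrictAntiOn f₀ (Set.Ico 0 1) := by
    apply strictAntiOn_of_deriv_neg (convex_Ico 0 1) hcont
    rw [interior_Ico]
    exact hderivneg
  refine ⟨hderivneg, hanti, ?_⟩
  rintro x ⟨hx0, hx1⟩ hfx
  by_contra hne
  have hx0' : 0 < x := lt_of_le_of_ne hx0 (Ne.symm hne)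
  have h0 : f₀ 0 = 0 := by rw [hf]; simp
  have := hanti ⟨le_refl 0, by norm_num⟩ ⟨hx0, hx1⟩ hx0'
  rw [h0, hfx] at this
  exact lt_irrefl 0 this
end

section
/- Let μ > 1, α ∈ [0,1], and θ = 2α(μ-1)/(μ + α(μ-1)). If θ > 1/2, then f₀(x) = log(1-x) + x/(1-θx) has exactly one root in the open interval (0,1). -/
theorem stmt1 (μ α : ℝ) (hμ : 1 < μ) (hα : α ∈ Set.Icc (0:ℝ) 1)
    (θ : ℝ) (hθ : θ = 2*α*(μ-1)/(μ + α*(μ-1))) (hθhalf : 1/2 < θ)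
    (f₀ : ℝ → ℝ) (hf : ∀ x, f₀ x = Real.log (1-x) + x/(1-θ*x)) :
    ∃! x, x ∈ Set.Ioo (0:ℝ) 1 ∧ f₀ x = 0 := by
  have hθ0 : 0 < θ := by linarith
  have hα0 : 0 ≤ α := hα.1
  have hα1 : α ≤ 1 := hα.2
  have hθ1 : θ < 1 := by
    have hD : 0 < μ + α*(μ-1) := by nlinarith
    rw [hθ, div_lt_one hD]; nlinarith
  set c : ℝ := (2*θ-1)/θ^2 with hc
  have hθ2 : 0 < θ^2 := by positivity
  have hc0 : 0 < c := div_pos (by linarith) hθ2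
  have hc1 : c < 1 := by rw [hc, div_lt_one hθ2]; nlinarith [sq_nonneg (θ-1)]
  have hfe : f₀ = fun y => Real.log (1-y) + y/(1-θ*y) := funext hf
  -- derivative
  have hderiv : ∀ x : ℝ, x < 1 → HasDerivAt f₀ (1/(1-θ*x)^2 - 1/(1-x)) x := by
    intro x hx
    have h1x : 0 < 1 - x := by linarith
    have hne : (1:ℝ) - x ≠ 0 := ne_of_gt h1x
    have hθx : 0 < 1 - θ*x := by nlinarith [mul_lt_mul_of_pos_left hx hθ0]
    have hne2 : (1:ℝ) - θ*x ≠ 0 := ne_of_gt hθx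
    have ha : HasDerivAt (fun y : ℝ => 1 - y) (-1) x := by
      simpa using (hasDerivAt_id x).const_sub 1
    have h1 : HasDerivAt (fun y : ℝ => Real.log (1-y)) ((1-x)⁻¹ * (-1)) x :=
      (Real.hasDerivAt_log hne).comp x ha
    have hb : HasDerivAt (fun y : ℝ => 1 - θ*y) (-θ) x := by
      simpa using ((hasDerivAt_id x).const_mul θ).const_sub 1
    have h2 : HasDerivAt (fun y : ℝ => y/(1-θ*y))
        ((1*(1-θ*x) - x*(-θ))/(1-θ*x)^2) x :=
      (hasDerivAt_id x).div hb hne2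
    have h3 := h1.add h2
    rw [hfe]
    refine h3.congr_deriv ?_
    ring
  -- continuity
  have hcont : ∀ s : Set ℝ, s ⊆ Set.Iio 1 → ContinuousOn f₀ s := by
    intro s hs x hx
    exact (hderiv x (hs hx)).continuousAt.continuousWithinAt
  -- strict monotone on [0,c]
  have hmono : StrictMonoOn f₀ (Set.Icc 0 c) := by
    apply strictMonoOn_of_deriv_pos (convex_Icc 0 c)
      (hcont _ (fun x hx => lt_of_le_of_lt hx.2 hc1))
    intro x hx
    rw [interior_Icc] at hx
    have hx1 : x < 1 := lt_trans hx.2 hc1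
    rw [(hderiv x hx1).deriv]
    have h1x : 0 < 1 - x := by linarith
    have hθx : 0 < 1 - θ*x := by nlinarith [mul_lt_mul_of_pos_left hx1 hθ0]
    rw [sub_pos, div_lt_div_iff₀ h1x (by positivity)]
    have hxc : x * θ^2 < 2*θ-1 := (lt_div_iff₀ hθ2).mp hx.2
    nlinarith [mul_pos hx.1 hθ2, mul_lt_mul_of_pos_left hxc hx.1]
  -- strict anti on [c,1)
  have hanti : StrictAntiOn f₀ (Set.Ico c 1) := by
    apply strictAntiOn_of_deriv_neg (convex_Ico c 1)
      (hcont _ (fun x hx => hx.2))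
    intro x hx
    rw [interior_Ico] at hx
    have hx1 : x < 1 := hx.2
    rw [(hderiv x hx1).deriv]
    have h1x : 0 < 1 - x := by linarith
    have hx0 : 0 < x := lt_trans hc0 hx.1
    have hθx : 0 < 1 - θ*x := by nlinarith [mul_lt_mul_of_pos_left hx1 hθ0]
    rw [sub_neg, div_lt_div_iff₀ (by positivity) h1x]
    have hxc : 2*θ-1 < x * θ^2 := (div_lt_iff₀ hθ2).mp hx.1
    nlinarith [mul_lt_mul_of_pos_left hxc hx0]
  have f00 : f₀ 0 = 0 := by rw [hf]; simp
  have hfc : 0 < f₀ c := by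
    have := hmono ⟨le_refl 0, hc0.le⟩ ⟨hc0.le, le_refl c⟩ hc0
    rwa [f00] at this
  -- point near 1 where f₀ < 0
  set ε : ℝ := min (Real.exp (-(1 + 1/(1-θ)))) ((1-c)/2) with hεdef
  have hε0 : 0 < ε := lt_min (Real.exp_pos _) (by linarith)
  set x₁ : ℝ := 1 - ε with hx₁def
  have hεle : ε ≤ (1-c)/2 := min_le_right _ _
  have hx₁c : c < x₁ := by simp only [hx₁def]; linarith
  have hx₁1 : x₁ < 1 := by simp only [hx₁def]; linarith
  have hx₁0 : 0 < x₁ := lt_trans hc0 hx₁c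
  have hθ1' : 0 < 1 - θ := by linarith
  have hθx₁ : 1 - θ ≤ 1 - θ*x₁ := by nlinarith
  have hθx₁0 : 0 < 1 - θ*x₁ := lt_of_lt_of_le hθ1' hθx₁
  have hlog : Real.log ε ≤ -(1 + 1/(1-θ)) := by
    have := Real.log_le_log hε0 (min_le_left (Real.exp (-(1 + 1/(1-θ)))) ((1-c)/2))
    rwa [Real.log_exp] at this
  have hfrac : x₁/(1-θ*x₁) ≤ 1/(1-θ) := by
    rw [div_le_div_iff₀ hθx₁0 hθ1']
    nlinarith
  have hfx₁ : f₀ x₁ < 0 := by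
    rw [hf]
    have h1x₁ : 1 - x₁ = ε := by simp [hx₁def]
    rw [h1x₁]
    linarith
  -- IVT gives a root in (c, x₁)
  have hIVT := intermediate_value_Ioo' (le_of_lt hx₁c)
    (hcont _ (fun x hx => lt_of_le_of_lt hx.2 hx₁1))
  obtain ⟨x₀, hx₀mem, hx₀⟩ := hIVT ⟨hfx₁, hfc⟩
  have hx₀0 : 0 < x₀ := lt_trans hc0 hx₀mem.1
  have hx₀1 : x₀ < 1 := lt_trans hx₀mem.2 hx₁1
  -- uniqueness
  have hroot_gt : ∀ y ∈ Set.Ioo (0:ℝ) 1, f₀ y = 0 → c < y := by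
    intro y hy hfy
    by_contra h
    push_neg at h
    have := hmono ⟨le_refl 0, hc0.le⟩ ⟨hy.1.le, h⟩ hy.1
    rw [f00, hfy] at this
    exact lt_irrefl 0 this
  refine ⟨x₀, ⟨⟨hx₀0, hx₀1⟩, hx₀⟩, ?_⟩
  rintro y ⟨hy, hfy⟩
  have hyc := hroot_gt y hy hfy
  exact hanti.injOn ⟨hyc.le, hy.2⟩ ⟨hx₀mem.1.le, hx₀1⟩ (hfy.trans hx₀.symm)
end

section
/- Fix μ > 1, λ > 0, ω > 0, α ∈ [0,1] with λ(μ-1) > ω (i.e. R₀ = μλ/(λ+ω) > 1). Define f(x) = log(1-x) + (λμ + ωα)x / (λ + ω(1-α) + 2ωα(1-x)) for x ∈ [0,1). Then f has a unique root τ in (0,1), and moreover f'(τ) < 0. -/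
open Real Set

private lemma aux_main (a d0 c : ℝ) (hc0 : 0 ≤ c) (hdc : 0 < d0 - c)
    (had : d0 < a) (hd0 : 0 < d0) (g : ℝ → ℝ)
    (hg : ∀ x, g x = Real.log (1-x) + a*x/(d0-c*x)) :
    ∃ τ, (τ ∈ Set.Ioo (0:ℝ) 1 ∧ g τ = 0 ∧ deriv g τ < 0) ∧
      ∀ x ∈ Set.Ioo (0:ℝ) 1, g x = 0 → x = τ := by
  have hge : g = fun x => Real.log (1-x) + a*x/(d0-c*x) := funext hg
  subst hge
  have ha0 : 0 < a := lt_trans hd0 had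
  have hden : ∀ x : ℝ, x ≤ 1 → 0 < d0 - c*x := by
    intro x hx
    nlinarith [mul_nonneg hc0 (sub_nonneg.mpr hx)]
  -- derivative formula
  have hasD : ∀ x : ℝ, x < 1 → HasDerivAt (fun x => Real.log (1-x) + a*x/(d0-c*x))
      ((a*d0*(1-x) - (d0-c*x)^2) / ((1-x)*(d0-c*x)^2)) x := by
    intro x hx
    have h1x : (0:ℝ) < 1 - x := by linarith
    have hdx := hden x hx.le
    have H1 : HasDerivAt (fun y : ℝ => Real.log (1-y)) ((-1)/(1-x)) x := by
      have h2 : HasDerivAt (fun y : ℝ => 1 - y) (-1) x := by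
        simpa using (hasDerivAt_id x).const_sub 1
      exact h2.log h1x.ne'
    have H2 : HasDerivAt (fun y : ℝ => a*y/(d0-c*y))
        ((a*(d0-c*x) - (a*x)*(-c))/(d0-c*x)^2) x := by
      have hnum : HasDerivAt (fun y : ℝ => a*y) a x := by
        simpa using (hasDerivAt_id x).const_mul a
      have hdenD : HasDerivAt (fun y : ℝ => d0 - c*y) (-c) x := by
        simpa using ((hasDerivAt_id x).const_mul c).const_sub d0
      exact hnum.div hdenD hdx.ne'
    have H := H1.add H2
    refine H.congr_deriv ?_
    rw [div_add_div _ _ h1x.ne' (pow_pos hdx 2).ne', div_eq_div_iff (mul_ne_zero h1x.ne' (pow_pos hdx 2).ne') (mul_ne_zero h1x.ne' (pow_pos hdx 2).ne')]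
    ring
  have hcont : ∀ x : ℝ, x < 1 → ContinuousAt (fun x => Real.log (1-x) + a*x/(d0-c*x)) x :=
    fun x hx => (hasD x hx).continuousAt
  -- root x₀ of the numerator q
  have hqcont : Continuous (fun x : ℝ => a*d0*(1-x) - (d0-c*x)^2) := by continuity
  have h0pos : (0:ℝ) < a*d0*(1-(0:ℝ)) - (d0-c*0)^2 := by nlinarith
  have h1neg : a*d0*(1-(1:ℝ)) - (d0-c*1)^2 < 0 := by nlinarith
  obtain ⟨x₀, hx₀mem, hx₀⟩ :=
    intermediate_value_Ioo' (by norm_num : (0:ℝ) ≤ 1) hqcont.continuousOn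
      (Set.mem_Ioo.mpr ⟨h1neg, h0pos⟩)
  have hx₀ : a*d0*(1-x₀) - (d0-c*x₀)^2 = 0 := hx₀
  have hx₀0 : 0 < x₀ := hx₀mem.1
  have hx₀1 : x₀ < 1 := hx₀mem.2
  -- sign of q
  have hqpos : ∀ x : ℝ, 0 < x → x < x₀ → 0 < a*d0*(1-x) - (d0-c*x)^2 := by
    intro x hx1 hx2
    have hid : x₀ * (a*d0*(1-x) - (d0-c*x)^2)
        = (x₀ - x)*(c^2*x*x₀ + (a*d0 - d0^2))
          + x * (a*d0*(1-x₀) - (d0-c*x₀)^2) := by ring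
    rw [hx₀] at hid
    nlinarith [mul_nonneg (mul_nonneg (sq_nonneg c) hx1.le) hx₀0.le]
  have hqneg : ∀ x : ℝ, x₀ < x → a*d0*(1-x) - (d0-c*x)^2 < 0 := by
    intro x hx2
    have hx1 : 0 < x := lt_trans hx₀0 hx2
    have hid : x₀ * (a*d0*(1-x) - (d0-c*x)^2)
        = (x₀ - x)*(c^2*x*x₀ + (a*d0 - d0^2))
          + x * (a*d0*(1-x₀) - (d0-c*x₀)^2) := by ring
    rw [hx₀] at hid
    nlinarith [mul_nonneg (mul_nonneg (sq_nonneg c) hx1.le) hx₀0.le]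
  -- strict monotone on [0, x₀]
  have mono : StrictMonoOn (fun x => Real.log (1-x) + a*x/(d0-c*x)) (Icc 0 x₀) := by
    apply strictMonoOn_of_deriv_pos (convex_Icc _ _)
    · exact fun x hx => (hcont x (lt_of_le_of_lt hx.2 hx₀1)).continuousWithinAt
    · intro x hx
      rw [interior_Icc] at hx
      have hxlt1 : x < 1 := lt_trans hx.2 hx₀1
      rw [(hasD x hxlt1).deriv]
      exact div_pos (hqpos x hx.1 hx.2)
        (mul_pos (by linarith) (pow_pos (hden x hxlt1.le) 2))
  have g0 : (fun x => Real.log (1-x) + a*x/(d0-c*x)) 0 = 0 := by simp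
  have gx₀pos : 0 < (fun x => Real.log (1-x) + a*x/(d0-c*x)) x₀ := by
    have := mono (Set.mem_Icc.mpr ⟨le_rfl, hx₀0.le⟩) (Set.mem_Icc.mpr ⟨hx₀0.le, le_rfl⟩) hx₀0
    rwa [g0] at this
  -- point x₁ where g is negative
  set M := a/(d0-c) with hM
  have hM0 : 0 ≤ M := div_nonneg ha0.le hdc.le
  set x₁ := max ((x₀+1)/2) (1 - Real.exp (-(M+1))) with hx₁
  have hx₁1 : x₁ < 1 := by
    apply max_lt (by linarith)
    have := Real.exp_pos (-(M+1))
    linarith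
  have hx₀x₁ : x₀ < x₁ := lt_of_lt_of_le (by linarith) (le_max_left _ _)
  have hx₁0 : 0 < x₁ := lt_trans hx₀0 hx₀x₁
  have hbound : a*x₁/(d0-c*x₁) ≤ M := by
    rw [hM, div_le_div_iff₀ (hden x₁ hx₁1.le) hdc]
    nlinarith [mul_nonneg ha0.le (mul_nonneg hd0.le (sub_nonneg.mpr hx₁1.le))]
  have hlogb : Real.log (1-x₁) ≤ -(M+1) := by
    have h1 : 1 - x₁ ≤ Real.exp (-(M+1)) := by
      have := le_max_right ((x₀+1)/2) (1 - Real.exp (-(M+1)))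
      linarith [hx₁ ▸ this]
    calc Real.log (1-x₁) ≤ Real.log (Real.exp (-(M+1))) :=
          Real.log_le_log (by linarith) h1
      _ = -(M+1) := Real.log_exp _
  have gx₁neg : (fun x => Real.log (1-x) + a*x/(d0-c*x)) x₁ < 0 := by
    simp only
    linarith
  -- the root τ
  obtain ⟨τ, hτmem, hτ⟩ :=
    intermediate_value_Ioo' hx₀x₁.le
      (fun x hx => (hcont x (lt_of_le_of_lt hx.2 hx₁1)).continuousWithinAt)
      (Set.mem_Ioo.mpr ⟨gx₁neg, gx₀pos⟩)
  have hτ1 : τ < 1 := lt_trans hτmem.2 hx₁1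
  -- strict anti on [x₀, 1)
  have anti : StrictAntiOn (fun x => Real.log (1-x) + a*x/(d0-c*x)) (Ico x₀ 1) := by
    apply strictAntiOn_of_deriv_neg (convex_Ico _ _)
    · exact fun x hx => (hcont x hx.2).continuousWithinAt
    · intro x hx
      rw [interior_Ico] at hx
      rw [(hasD x hx.2).deriv]
      exact div_neg_of_neg_of_pos (hqneg x hx.1)
        (mul_pos (by linarith [hx.2]) (pow_pos (hden x hx.2.le) 2))
  refine ⟨τ, ⟨⟨lt_trans hx₀0 hτmem.1, hτ1⟩, hτ, ?_⟩, ?_⟩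
  · rw [(hasD τ hτ1).deriv]
    exact div_neg_of_neg_of_pos (hqneg τ hτmem.1)
      (mul_pos (by linarith) (pow_pos (hden τ hτ1.le) 2))
  · intro x hx hgx
    by_cases hxx : x ≤ x₀
    · exfalso
      have := mono (Set.mem_Icc.mpr ⟨le_rfl, hx₀0.le⟩)
        (Set.mem_Icc.mpr ⟨hx.1.le, hxx⟩) hx.1
      rw [g0, hgx] at this
      exact lt_irrefl 0 this
    · push_neg at hxx
      exact anti.injOn (Set.mem_Ico.mpr ⟨hxx.le, hx.2⟩)
        (Set.mem_Ico.mpr ⟨hτmem.1.le, hτ1⟩) (hgx.trans hτ.symm)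

theorem stmt3 (μ lam ω α : ℝ) (hμ : 1 < μ) (hlam : 0 < lam) (hω : 0 < ω)
    (hα : α ∈ Set.Icc (0:ℝ) 1) (hR : ω < lam*(μ-1))
    (f : ℝ → ℝ)
    (hf : ∀ x, f x = Real.log (1-x) +
      (lam*μ + ω*α)*x/(lam + ω*(1-α) + 2*ω*α*(1-x))) :
    ∃ τ, (τ ∈ Set.Ioo (0:ℝ) 1 ∧ f τ = 0 ∧ deriv f τ < 0) ∧
      ∀ x ∈ Set.Ioo (0:ℝ) 1, f x = 0 → x = τ := by
  obtain ⟨hα0, hα1⟩ := hα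
  apply aux_main (lam*μ + ω*α) (lam + ω*(1+α)) (2*ω*α)
  · positivity
  · nlinarith [mul_nonneg hω.le (sub_nonneg.mpr hα1)]
  · nlinarith
  · nlinarith
  · intro x
    rw [hf x, show lam + ω*(1-α) + 2*ω*α*(1-x) = lam + ω*(1+α) - 2*ω*α*x from by ring]
end

section
/- Fix μ > 1, λ > 0, ω > 0, α ∈ [0,1]. Define f as in the SI final-size equation: f(x) = log(1-x) + (λμ + ωα)x / (λ + ω(1-α) + 2ωα(1-x)). Then f'(0) > 0 if and only if λ(μ-1) > ω. -/
theorem stmt4 (μ lam ω α : ℝ) (hμ : 1 < μ) (hlam : 0 < lam) (hω : 0 < ω)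
    (hα : α ∈ Set.Icc (0:ℝ) 1)
    (f : ℝ → ℝ)
    (hf : ∀ x, f x = Real.log (1-x) +
      (lam*μ + ω*α)*x/(lam + ω*(1-α) + 2*ω*α*(1-x))) :
    0 < deriv f 0 ↔ ω < lam*(μ-1) := by
  obtain ⟨hα0, hα1⟩ := hα
  have hfun : f = fun x => Real.log (1-x) +
      (lam*μ + ω*α)*x/(lam + ω*(1-α) + 2*ω*α*(1-x)) := funext hf
  set c := lam*μ + ω*α with hc
  have hd0 : (0:ℝ) < lam + ω*(1+α) := by nlinarith
  have hden0 : lam + ω*(1-α) + 2*ω*α*(1-(0:ℝ)) = lam + ω*(1+α) := by ring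
  have h1 : HasDerivAt (fun x:ℝ => Real.log (1-x)) (-1) 0 := by
    have := (((hasDerivAt_id (0:ℝ)).const_sub 1).log (by norm_num))
    simpa using this
  have hnum : HasDerivAt (fun x:ℝ => c*x) c 0 := by
    simpa using (hasDerivAt_id (0:ℝ)).const_mul c
  have hden : HasDerivAt (fun x:ℝ => lam + ω*(1-α) + 2*ω*α*(1-x)) (-(2*ω*α)) 0 := by
    have h := ((hasDerivAt_id (0:ℝ)).const_sub 1).const_mul (2*ω*α)
    have h' := h.const_add (lam + ω*(1-α))
    simpa using h'
  have h2 : HasDerivAt (fun x:ℝ => c*x/(lam + ω*(1-α) + 2*ω*α*(1-x)))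
      (c/(lam + ω*(1+α))) 0 := by
    have h : HasDerivAt (fun x:ℝ => c*x/(lam + ω*(1-α) + 2*ω*α*(1-x))) _ 0 :=
      hnum.div hden (by rw [hden0]; exact ne_of_gt hd0)
    convert h using 1
    rw [hden0]
    field_simp
    ring
  have hderiv : deriv f 0 = -1 + c/(lam + ω*(1+α)) := by
    rw [hfun]
    exact (h1.add h2).deriv
  rw [hderiv]
  rw [show (-1 + c/(lam + ω*(1+α)) : ℝ) = c/(lam + ω*(1+α)) - 1 by ring,
    sub_pos, one_lt_div hd0, hc]
  constructor <;> intro h <;> nlinarith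
end

section
/- Fix μ > 1, ω > 0 and α ∈ (1/2, 1) with μ < α/(1-α). With x₀ = (1+α)/(2α) - 1/(2μ) and g(x,λ) = log(1-x) + (λμ + ωα)x / (λ + ω(1-α) + 2ωα(1-x)), then for all λ > 0 the value g(x₀, λ) is independent of λ and equals h(μ,α) := log( (α - (1-α)μ)/(2αμ) ) + (μ + α(μ-1))/(2α). -/
theorem stmt11 (μ ω α : ℝ) (hμ : 1 < μ) (hω : 0 < ω)
    (hα : α ∈ Set.Ioo (1/2 : ℝ) 1) (hμα : μ < α/(1-α))
    (x₀ : ℝ) (hx₀ : x₀ = (1+α)/(2*α) - 1/(2*μ))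
    (g : ℝ → ℝ → ℝ)
    (hg : ∀ x l, g x l = Real.log (1-x) +
      (l*μ + ω*α)*x/(l + ω*(1-α) + 2*ω*α*(1-x))) :
    ∀ l : ℝ, 0 < l →
      g x₀ l = Real.log ((α - (1-α)*μ)/(2*α*μ)) + (μ + α*(μ-1))/(2*α) := by
  intro l hl
  obtain ⟨hα1, hα2⟩ := hα
  have hα0 : (0:ℝ) < α := lt_trans (by norm_num) hα1
  have hμ0 : (0:ℝ) < μ := lt_trans one_pos hμ
  have hx : 1 - x₀ = (α - (1-α)*μ)/(2*α*μ) := by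
    rw [hx₀]; field_simp; ring
  have hden : l + ω*(1-α) + 2*ω*α*(1-x₀) = l + ω*α/μ := by
    rw [hx]; field_simp; ring
  have hdpos : (0:ℝ) < l + ω*α/μ := by positivity
  have hfrac : (l*μ + ω*α)*x₀/(l + ω*α/μ) = μ * x₀ := by
    have : l*μ + ω*α = μ * (l + ω*α/μ) := by field_simp
    rw [this]; field_simp
  have hμx : μ * x₀ = (μ + α*(μ-1))/(2*α) := by
    rw [hx₀]; field_simp; ring
  rw [hg, hden, hfrac, hx, hμx]
end

section
/- Define ĥ(θ) = 2·log(1-θ) - log(7+θ²) + (3+θ)/(2(1-θ)) for θ ∈ [0,1). Then ĥ(0) = 3/2 - log 7 < 0, ĥ is strictly increasing on [0,1), ĥ(θ) → ∞ as θ → 1⁻, and consequently ĥ has a unique root θ* in (0,1). -/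
open Real Filter Set

private lemma hderiv14 (θ : ℝ) (h0 : 0 < θ) (h1 : θ < 1) :
    HasDerivAt (fun θ : ℝ => 2*Real.log (1-θ) - Real.log (7+θ^2) + (3+θ)/(2*(1-θ)))
      (2*θ/(1-θ)^2 - 2*θ/(7+θ^2)) θ := by
  have hne : (1:ℝ) - θ ≠ 0 := by nlinarith
  have hne7 : (7:ℝ) + θ^2 ≠ 0 := by nlinarith
  have d1 : HasDerivAt (fun θ : ℝ => 1 - θ) (-1) θ := by
    exact ((hasDerivAt_const θ (1:ℝ)).sub (hasDerivAt_id θ)).congr_deriv (by simp)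
  have dlog1 : HasDerivAt (fun θ : ℝ => Real.log (1-θ)) ((1-θ)⁻¹ * (-1)) θ :=
    (Real.hasDerivAt_log hne).comp θ d1
  have d2 : HasDerivAt (fun θ : ℝ => 7 + θ^2) (2*θ) θ := by
    exact ((hasDerivAt_const θ (7:ℝ)).add ((hasDerivAt_id θ).pow 2)).congr_deriv (by simp)
  have dlog2 : HasDerivAt (fun θ : ℝ => Real.log (7+θ^2)) ((7+θ^2)⁻¹ * (2*θ)) θ :=
    by have := (Real.hasDerivAt_log hne7).comp θ d2; exact this
  have d3 : HasDerivAt (fun θ : ℝ => 3 + θ) 1 θ := by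
    exact ((hasDerivAt_const θ (3:ℝ)).add (hasDerivAt_id θ)).congr_deriv (by simp)
  have d4 : HasDerivAt (fun θ : ℝ => 2*(1-θ)) (-2) θ := by
    exact ((hasDerivAt_const θ (2:ℝ)).mul d1).congr_deriv (by simp)
  have hne2 : 2*((1:ℝ)-θ) ≠ 0 := by nlinarith
  have ddiv : HasDerivAt (fun θ : ℝ => (3+θ)/(2*(1-θ)))
      ((1*(2*(1-θ)) - (3+θ)*(-2))/(2*(1-θ))^2) θ := d3.div d4 hne2
  have := ((dlog1.const_mul 2).sub dlog2).add ddiv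
  refine this.congr_deriv ?_
  field_simp
  ring

private lemma hcont14 : ContinuousOn
    (fun θ : ℝ => 2*Real.log (1-θ) - Real.log (7+θ^2) + (3+θ)/(2*(1-θ)))
    (Set.Ico (0:ℝ) 1) := by
  have c1 : ContinuousOn (fun θ : ℝ => 1 - θ) (Set.Ico (0:ℝ) 1) := by fun_prop
  have c7 : ContinuousOn (fun θ : ℝ => 7 + θ^2) (Set.Ico (0:ℝ) 1) := by fun_prop
  refine ContinuousOn.add (ContinuousOn.sub (ContinuousOn.mul continuousOn_const ?_) ?_) ?_
  · exact Real.continuousOn_log.comp c1 (fun x hx => by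
      simp only [mem_compl_iff, mem_singleton_iff]
      have := hx.2; intro hc; linarith)
  · exact Real.continuousOn_log.comp c7 (fun x hx => by
      simp only [mem_compl_iff, mem_singleton_iff]
      intro hc; nlinarith [sq_nonneg x])
  · apply ContinuousOn.div (by fun_prop) (by fun_prop)
    intro x hx
    have := hx.2
    intro hc; nlinarith

theorem stmt14 (h : ℝ → ℝ)
    (hh : ∀ θ, h θ = 2*Real.log (1-θ) - Real.log (7+θ^2) + (3+θ)/(2*(1-θ))) :
    h 0 = 3/2 - Real.log 7 ∧ h 0 < 0 ∧
    StrictMonoOn h (Set.Ico (0:ℝ) 1) ∧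
    Filter.Tendsto h (nhdsWithin 1 (Set.Iio 1)) Filter.atTop ∧
    ∃! θ, θ ∈ Set.Ioo (0:ℝ) 1 ∧ h θ = 0 := by
  have heq : h = fun θ => 2*Real.log (1-θ) - Real.log (7+θ^2) + (3+θ)/(2*(1-θ)) :=
    funext hh
  -- value at 0
  have hv0 : h 0 = 3/2 - Real.log 7 := by
    rw [hh]; norm_num; ring
  have hlog7 : (3:ℝ)/2 < Real.log 7 := by
    have h1 : Real.exp (3/2) < 7 := by
      have h3 : Real.exp 3 < 49 := by
        have h13 : Real.exp 3 = Real.exp 1 ^ (3:ℕ) := by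
          rw [← Real.exp_nat_mul]; norm_num
        rw [h13]
        calc Real.exp 1 ^ (3:ℕ) < 2.7182818286 ^ (3:ℕ) :=
              pow_lt_pow_left₀ Real.exp_one_lt_d9 (Real.exp_pos 1).le (by norm_num)
          _ < 49 := by norm_num
      have hsq : Real.exp (3/2) ^ 2 = Real.exp 3 := by
        rw [sq, ← Real.exp_add]; norm_num
      nlinarith [Real.exp_pos (3/2)]
    calc (3:ℝ)/2 = Real.log (Real.exp (3/2)) := (Real.log_exp _).symm
      _ < Real.log 7 := Real.log_lt_log (Real.exp_pos _) h1
  have hv0neg : h 0 < 0 := by rw [hv0]; linarith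
  -- monotone
  have hmono : StrictMonoOn h (Set.Ico (0:ℝ) 1) := by
    rw [heq]
    apply strictMonoOn_of_deriv_pos (convex_Ico 0 1) hcont14
    intro x hx
    rw [interior_Ico] at hx
    obtain ⟨hx0, hx1⟩ := hx
    rw [(hderiv14 x hx0 hx1).deriv]
    have h1 : (0:ℝ) < (1-x)^2 := pow_pos (by linarith) 2
    have h7 : (0:ℝ) < 7 + x^2 := by positivity
    have : (1-x)^2 < 7 + x^2 := by nlinarith
    have := div_lt_div_of_pos_left (by linarith : (0:ℝ) < 2*x) h1 this
    linarith
  -- tendsto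
  have htend : Filter.Tendsto h (nhdsWithin 1 (Set.Iio 1)) Filter.atTop := by
    have hmap : Tendsto (fun θ : ℝ => 1 - θ) (nhdsWithin 1 (Set.Iio 1))
        (nhdsWithin 0 (Set.Ioi 0)) := by
      apply tendsto_nhdsWithin_of_tendsto_nhds_of_eventually_within
      · have hc : Continuous (fun θ : ℝ => 1 - θ) := continuous_const.sub continuous_id
        have : Tendsto (fun θ : ℝ => 1 - θ) (nhds 1) (nhds 0) := by
          simpa using hc.tendsto (1:ℝ)
        exact this.mono_left nhdsWithin_le_nhds
      · filter_upwards [self_mem_nhdsWithin] with x hx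
        simp only [Set.mem_Iio] at hx
        simpa using hx
    -- F u := 2 log u + (4-u)/(2u) tends atTop as u → 0⁺
    have hF : Tendsto (fun u : ℝ => 2*Real.log u + (4-u)/(2*u))
        (nhdsWithin 0 (Set.Ioi 0)) atTop := by
      have hnum : Tendsto (fun u : ℝ => 4*(Real.log u * u) + 4 - u)
          (nhdsWithin 0 (Set.Ioi 0)) (nhds 4) := by
        have hl : Tendsto (fun u : ℝ => Real.log u * u) (nhdsWithin 0 (Set.Ioi 0))
            (nhds 0) := by
          have := tendsto_log_mul_rpow_nhdsGT_zero (r := 1) one_pos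
          refine this.congr' ?_
          filter_upwards [self_mem_nhdsWithin] with u hu
          rw [Real.rpow_one]
        have : Tendsto (fun u : ℝ => 4*(Real.log u * u) + 4 - u)
            (nhdsWithin 0 (Set.Ioi 0)) (nhds (4*0 + 4 - 0)) := by
          exact (((hl.const_mul 4).add_const 4).sub (tendsto_id.mono_left nhdsWithin_le_nhds))
        simpa using this
      have hinv : Tendsto (fun u : ℝ => (2*u)⁻¹) (nhdsWithin 0 (Set.Ioi 0)) atTop := by
        have h2 : Tendsto (fun u : ℝ => 2*u) (nhdsWithin 0 (Set.Ioi 0))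
            (nhdsWithin 0 (Set.Ioi 0)) := by
          apply tendsto_nhdsWithin_of_tendsto_nhds_of_eventually_within
          · have : Tendsto (fun u : ℝ => 2*u) (nhds 0) (nhds (2*0)) :=
              (continuous_const.mul continuous_id).tendsto 0
            simpa using this.mono_left nhdsWithin_le_nhds
          · filter_upwards [self_mem_nhdsWithin] with u hu
            simp only [Set.mem_Ioi] at hu ⊢
            linarith
        exact tendsto_inv_nhdsGT_zero.comp h2
      have := Filter.Tendsto.pos_mul_atTop (by norm_num : (0:ℝ) < 4) hnum hinv
      refine this.congr' ?_
      filter_upwards [self_mem_nhdsWithin] with u hu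
      have hu' : u ≠ 0 := ne_of_gt hu
      field_simp
      ring
    have hlog8 : Tendsto (fun θ : ℝ => -Real.log (7+θ^2)) (nhdsWithin 1 (Set.Iio 1))
        (nhds (-Real.log 8)) := by
      have hc : ContinuousAt (fun θ : ℝ => -Real.log (7+θ^2)) 1 := by
        apply ContinuousAt.neg
        apply Real.continuousAt_log (by norm_num) |>.comp
        fun_prop
      have := hc.tendsto
      norm_num at this ⊢
      exact this.mono_left nhdsWithin_le_nhds
    have := (hF.comp hmap).atTop_add hlog8
    refine this.congr ?_
    intro θ
    rw [hh]
    simp only [Function.comp]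
    ring
  -- unique root
  refine ⟨hv0, hv0neg, hmono, htend, ?_⟩
  have hev : ∀ᶠ θ in nhdsWithin 1 (Set.Iio 1), 0 < h θ ∧ θ ∈ Set.Ioo (0:ℝ) 1 := by
    have h1 : ∀ᶠ θ in nhdsWithin 1 (Set.Iio 1), 0 < h θ := htend.eventually_gt_atTop 0
    have h2 : ∀ᶠ θ in nhdsWithin 1 (Set.Iio 1), θ ∈ Set.Ioo (0:ℝ) 1 := by
      have hmem : Set.Ioi (0:ℝ) ∈ nhds (1:ℝ) := Ioi_mem_nhds one_pos
      filter_upwards [nhdsWithin_le_nhds hmem, self_mem_nhdsWithin] with x hx hx'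
      exact ⟨hx, hx'⟩
    exact h1.and h2
  obtain ⟨θ₁, hθ₁pos, hθ₁mem⟩ := hev.exists
  have hsub : Set.Icc (0:ℝ) θ₁ ⊆ Set.Ico (0:ℝ) 1 := fun x hx =>
    ⟨hx.1, lt_of_le_of_lt hx.2 hθ₁mem.2⟩
  have hconth : ContinuousOn h (Set.Icc (0:ℝ) θ₁) := by
    rw [heq]; exact hcont14.mono hsub
  have hivt := intermediate_value_Icc (le_of_lt hθ₁mem.1) hconth
  have h0mem : (0:ℝ) ∈ Set.Icc (h 0) (h θ₁) := ⟨le_of_lt hv0neg, le_of_lt hθ₁pos⟩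
  obtain ⟨θ₀, hθ₀mem, hθ₀val⟩ := hivt h0mem
  have hθ₀pos : 0 < θ₀ := by
    rcases lt_or_eq_of_le hθ₀mem.1 with h' | h'
    · exact h'
    · exfalso; rw [← h'] at hθ₀val; rw [← hθ₀val] at hv0neg; linarith
  have hθ₀lt : θ₀ < 1 := lt_of_le_of_lt hθ₀mem.2 hθ₁mem.2
  refine ⟨θ₀, ⟨⟨hθ₀pos, hθ₀lt⟩, hθ₀val⟩, ?_⟩
  rintro θ' ⟨⟨hp, hl⟩, hval⟩
  have hm1 : θ' ∈ Set.Ico (0:ℝ) 1 := ⟨le_of_lt hp, hl⟩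
  have hm2 : θ₀ ∈ Set.Ico (0:ℝ) 1 := ⟨le_of_lt hθ₀pos, hθ₀lt⟩
  exact hmono.injOn hm1 hm2 (by rw [hval, hθ₀val])
end
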